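/- Let ν = 2 and q₀, s₀ ∈ ℝ. Define F(t) = 1 - s₀ + (s₀ + (s₀+q₀)t)e^{-t} and G(t) = -(s₀ + (s₀+q₀)(t-1))e^{-t}. Then F(0) = 1, G(0) = q₀, and on any interval where F ≠ 0, q(t) = G(t)/F(t) together with s(t) = -q'(t) - q(t)² - 2q(t) solves q' = -s - q² - 2q, s' = q - qs with q(0)=q₀, s(0)=s₀. -/

import Mathlib

/-- Explicit solution of the derivative system q' = -s - q² - 2q, s' = q - qs
at the critical collision frequency ν = 2, via linearization. -/
theorem qs_solution_critical (q₀ s₀ : ℝ) (F G : ℝ → ℝ)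
    (hF : F = fun t => 1 - s₀ + (s₀ + (s₀ + q₀) * t) * Real.exp (-t))
    (hG : G = fun t => -(s₀ + (s₀ + q₀) * (t - 1)) * Real.exp (-t))
    (q s : ℝ → ℝ)
    (hq : q = fun t => G t / F t)
    (hs : s = fun t => -deriv q t - q t ^ 2 - 2 * q t) :
    F 0 = 1 ∧ G 0 = q₀ ∧
    (∀ t : ℝ, F t ≠ 0 →
      HasDerivAt q (-s t - q t ^ 2 - 2 * q t) t ∧ HasDerivAt s (q t - q t * s t) t) ∧
      q 0 = q₀ ∧ s 0 = s₀ := by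
  have hE : ∀ t : ℝ, HasDerivAt (fun u : ℝ => Real.exp (-u)) (-Real.exp (-t)) t := by
    intro t
    simpa using (hasDerivAt_neg t).exp
  have hF' : ∀ t : ℝ, HasDerivAt F (G t) t := by
    intro t
    rw [hF, hG]
    have h1 : HasDerivAt (fun u : ℝ => s₀ + (s₀ + q₀) * u) (s₀ + q₀) t := by
      simpa using ((hasDerivAt_id t).const_mul (s₀ + q₀)).const_add s₀
    have h2 := (h1.mul (hE t)).const_add (1 - s₀)
    refine h2.congr_deriv ?_
    ring
  have hG' : ∀ t : ℝ, HasDerivAt G (-(s₀ + q₀) * Real.exp (-t) - G t) t := by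
    intro t
    rw [hG]
    have h1 : HasDerivAt (fun u : ℝ => -(s₀ + (s₀ + q₀) * (u - 1))) (-(s₀ + q₀)) t := by
      have : HasDerivAt (fun u : ℝ => s₀ + (s₀ + q₀) * (u - 1)) (s₀ + q₀) t := by
        simpa using ((((hasDerivAt_id t).sub_const 1).const_mul (s₀ + q₀)).const_add s₀)
      exact this.neg
    have h2 := h1.mul (hE t)
    refine h2.congr_deriv ?_
    ring
  -- continuity of F
  have hFc : Continuous F := by
    rw [hF]; fun_prop
  -- derivative of q where F ≠ 0
  have hq' : ∀ t : ℝ, F t ≠ 0 →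
      HasDerivAt q (((-(s₀ + q₀) * Real.exp (-t) - G t) * F t - G t * G t) / F t ^ 2) t := by
    intro t ht
    rw [hq]
    exact (hG' t).div (hF' t) ht
  -- explicit form of s where F ≠ 0
  have hsval : ∀ t : ℝ, F t ≠ 0 → s t = 1 - (1 - s₀) / F t := by
    intro t ht
    rw [hs]
    simp only [(hq' t ht).deriv]
    have hqt : q t = G t / F t := by rw [hq]
    have hFt : F t = 1 - s₀ + (s₀ + (s₀ + q₀) * t) * Real.exp (-t) := by rw [hF]
    have hGt : G t = -(s₀ + (s₀ + q₀) * (t - 1)) * Real.exp (-t) := by rw [hG]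
    rw [hqt, hGt, hFt]
    rw [hFt] at ht
    generalize hD : 1 - s₀ + (s₀ + (s₀ + q₀) * t) * Real.exp (-t) = D at ht ⊢
    field_simp
    subst hD
    ring
  have key : ∀ t : ℝ, F t ≠ 0 →
      HasDerivAt q (-s t - q t ^ 2 - 2 * q t) t ∧ HasDerivAt s (q t - q t * s t) t := by
    intro t ht
    constructor
    · have h := hq' t ht
      have : -s t - q t ^ 2 - 2 * q t = deriv q t := by
        rw [hs]; ring
      rw [this, h.deriv]
      exact h
    · -- s agrees with 1 - (1-s₀)/F near t
      have hopen : ∀ᶠ u in nhds t, F u ≠ 0 :=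
        hFc.continuousAt.eventually_ne ht
      have heq : s =ᶠ[nhds t] fun u => 1 - (1 - s₀) / F u := by
        filter_upwards [hopen] with u hu
        exact hsval u hu
      have hst : HasDerivAt (fun u => 1 - (1 - s₀) / F u)
          ((1 - s₀) * G t / F t ^ 2) t := by
        have hd : HasDerivAt (fun u => (1 - s₀) / F u)
            ((0 * F t - (1 - s₀) * G t) / F t ^ 2) t :=
          (hasDerivAt_const t (1 - s₀)).div (hF' t) ht
        have := hd.const_sub 1
        refine this.congr_deriv ?_
        ring
      have hS : HasDerivAt s ((1 - s₀) * G t / F t ^ 2) t :=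
        HasDerivAt.congr_of_eventuallyEq hst heq
      have hval : q t - q t * s t = (1 - s₀) * G t / F t ^ 2 := by
        rw [hsval t ht, hq]
        field_simp
        ring
      rw [hval]
      exact hS
  have hF0 : F 0 = 1 := by rw [hF]; simp
  have hG0 : G 0 = q₀ := by rw [hG]; simp
  refine ⟨hF0, hG0, key, ?_, ?_⟩
  · rw [hq]; simp [hF0, hG0]
  · rw [hsval 0 (by rw [hF0]; norm_num), hF0]
    norm_num
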